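/- Consider the (δ-1)D+1 rows P_1,...,P_{(δ-1)D+1} of G(δ,k) as a collection of parts, where D = kδ. Every partial shortcut for these parts (i.e., any assignment of shortcut subgraphs to at least half of the parts) has either dilation at least (δ-1)D/2 or congestion at least (δ-1)D/4; in particular, its quality is at least (δ-1)D/4. -/

import Mathlib

open SimpleGraph

/-- Vertex type of the lower-bound graph `G(δ,k)`: the top path has `(δ-1)k+1` vertices
`p`, and there is a `((δ-1)D+1) × ((δ-1)D+1)` grid of vertices `v_{i,j}`, where `D = kδ`. -/
abbrev GDKVert (δ k : ℕ) : Type :=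
  Fin ((δ - 1) * k + 1) ⊕ (Fin ((δ - 1) * (k * δ) + 1) × Fin ((δ - 1) * (k * δ) + 1))

/-- The lower-bound graph `G(δ,k)` (indices zero-based, `D = kδ`): the `p`-vertices form a
path (the top path); each row `v_{i,·}` forms a path; each column `v_{·,c}` with `D ∣ c`
forms a path; and `v_{r,c}` is adjacent to `p_q` whenever `D ∣ r`, `D ∣ c` and
`q·D = c·k` (i.e. `q = (c/D)·k`). -/
def GDK (δ k : ℕ) : SimpleGraph (GDKVert δ k) :=
  SimpleGraph.fromRel (fun x y =>
    match x, y with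
    | Sum.inl a, Sum.inl b => (b : ℕ) = (a : ℕ) + 1
    | Sum.inr ⟨i, j⟩, Sum.inr ⟨i', j'⟩ =>
        (i = i' ∧ (j' : ℕ) = (j : ℕ) + 1) ∨
        (j = j' ∧ (k * δ) ∣ (j : ℕ) ∧ (i' : ℕ) = (i : ℕ) + 1)
    | Sum.inr ⟨i, j⟩, Sum.inl p =>
        (k * δ) ∣ (i : ℕ) ∧ (k * δ) ∣ (j : ℕ) ∧ (p : ℕ) * (k * δ) = (j : ℕ) * k
    | Sum.inl _, Sum.inr _ => False)

/-- The subgraph `G[P] + H`: the union of the subgraph of `G` induced by `P` with the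
subgraph `H`. -/
def partGraph {V : Type} (G : SimpleGraph V) (P : Set V) (H : G.Subgraph) : G.Subgraph :=
  (⊤ : G.Subgraph).induce P ⊔ H

/-- The `i`-th row of `G(δ,k)`, viewed as a part: the set of vertices `v_{i,j}` for all
`j`. -/
def gdkRow (δ k : ℕ) (i : Fin ((δ - 1) * (k * δ) + 1)) : Set (GDKVert δ k) :=
  {x | ∃ j, x = Sum.inr (i, j)}

def gdkPhi (δ k : ℕ) : GDKVert δ k → ℕ
  | Sum.inl a => (a : ℕ) * δ
  | Sum.inr x => (x.2 : ℕ)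

def gdkTop (δ k : ℕ) : Sym2 (GDKVert δ k) → Bool :=
  Sym2.lift ⟨fun x y => x.isLeft && y.isLeft, fun _ _ => Bool.and_comm _ _⟩

lemma gdkTop_mk (δ k : ℕ) (x y : GDKVert δ k) :
    gdkTop δ k s(x, y) = (x.isLeft && y.isLeft) := rfl

lemma gdkStep (δ k : ℕ) (hk : 0 < k) {u v : GDKVert δ k} (h : (GDK δ k).Adj u v) :
    gdkPhi δ k v ≤ gdkPhi δ k u + (if gdkTop δ k s(u, v) then δ else 1) := by
  rw [GDK, fromRel_adj] at h
  obtain ⟨hne, h⟩ := h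
  rcases u with a | ⟨i, j⟩ <;> rcases v with b | ⟨i', j'⟩
  · simp only [gdkTop_mk, Sum.isLeft_inl, Bool.and_self, if_pos, gdkPhi]
    have hb : (b : ℕ) ≤ (a : ℕ) + 1 := by omega
    calc (b : ℕ) * δ ≤ ((a : ℕ) + 1) * δ := Nat.mul_le_mul_right δ hb
      _ = (a : ℕ) * δ + δ := by ring
  · -- inl a, inr ⟨i',j'⟩
    simp only [gdkPhi, gdkTop_mk, Sum.isLeft_inl, Sum.isLeft_inr, Bool.and_false,
      Bool.false_eq_true, if_neg, not_false_iff]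
    rcases h with h | ⟨_, _, h3⟩
    · exact absurd h not_false
    · have hc : (a : ℕ) * δ * k = (j' : ℕ) * k := by
        calc (a : ℕ) * δ * k = (a : ℕ) * (k * δ) := by ring
          _ = (j' : ℕ) * k := h3
      have := Nat.eq_of_mul_eq_mul_right hk hc
      omega
  · -- inr ⟨i,j⟩, inl b
    simp only [gdkPhi, gdkTop_mk, Sum.isLeft_inl, Sum.isLeft_inr, Bool.and_false,
      Bool.false_eq_true, if_neg, not_false_iff]
    rcases h with ⟨_, _, h3⟩ | h
    · have hc : (b : ℕ) * δ * k = (j : ℕ) * k := by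
        calc (b : ℕ) * δ * k = (b : ℕ) * (k * δ) := by ring
          _ = (j : ℕ) * k := h3
      have := Nat.eq_of_mul_eq_mul_right hk hc
      omega
    · exact absurd h not_false
  · -- inr, inr
    simp only [gdkPhi, gdkTop_mk, Sum.isLeft_inr, Bool.and_self, Bool.false_eq_true, if_neg,
      not_false_iff]
    rcases h with (⟨_, h2⟩ | ⟨h1, _, _⟩) | (⟨_, h2⟩ | ⟨h1, _, _⟩)
    · omega
    · rw [h1]; omega
    · omega
    · rw [h1]; omega

lemma gdkWalk (δ k : ℕ) (hδ : 1 ≤ δ) (hk : 0 < k) {u v : GDKVert δ k}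
    (w : (GDK δ k).Walk u v) :
    gdkPhi δ k v ≤ gdkPhi δ k u + w.length + (δ - 1) * w.edges.countP (fun e => gdkTop δ k e) := by
  induction w with
  | nil => simp
  | @cons a b c h p ih =>
    rw [SimpleGraph.Walk.edges_cons, List.countP_cons, SimpleGraph.Walk.length_cons]
    have hs := gdkStep δ k hk h
    by_cases ht : gdkTop δ k s(a, b)
    · rw [if_pos ht] at hs
      simp only [ht, if_pos]
      rw [Nat.mul_succ]
      omega
    · rw [if_neg ht] at hs
      simp only [ht, Bool.false_eq_true, if_neg, not_false_iff, Nat.add_zero]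
      omega


/-- **Claim.** Consider the `(δ-1)D+1` rows of `G(δ,k)` as a collection of parts, where
`D = kδ`. Every partial shortcut for these parts (any assignment of shortcut subgraphs with
congestion `c` and dilation `d` to at least half of the parts) has either dilation at least
`(δ-1)D/2` or congestion at least `(δ-1)D/4`; in particular, its quality `c + d` is at
least `(δ-1)D/4`. -/
theorem gdk_partial_shortcut_lower_bound (δ k : ℕ) (hδ : 3 ≤ δ) (hk : 2 ≤ k)
    (I : Finset (Fin ((δ - 1) * (k * δ) + 1)))
    (H : Fin ((δ - 1) * (k * δ) + 1) → (GDK δ k).Subgraph) (c d : ℕ)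
    (hhalf : (δ - 1) * (k * δ) + 1 ≤ 2 * I.card)
    (hdil : ∀ i ∈ I, (partGraph (GDK δ k) (gdkRow δ k i) (H i)).coe.Connected ∧
      ∀ u v, (partGraph (GDK δ k) (gdkRow δ k i) (H i)).coe.dist u v ≤ d)
    (hcong : ∀ e : Sym2 (GDKVert δ k),
      {i | i ∈ I ∧ e ∈ (H i).edgeSet}.ncard ≤ c) :
    ((δ - 1) * (k * δ) ≤ 2 * d ∨ (δ - 1) * (k * δ) ≤ 4 * c) ∧
    (δ - 1) * (k * δ) ≤ 4 * (c + d) := by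
  classical
  have hk0 : 0 < k := by omega
  have hmn : ((δ - 1) * k) * δ = (δ - 1) * (k * δ) := by ring
  have hnpos : 0 < (δ - 1) * (k * δ) :=
    Nat.mul_pos (by omega) (Nat.mul_pos hk0 (by omega))
  have hmpos : 0 < (δ - 1) * k := Nat.mul_pos (by omega) hk0
  -- the finite set of top-path edges
  set Tfin : Finset (Sym2 (GDKVert δ k)) :=
    Finset.univ.filter (fun e => gdkTop δ k e = true ∧ e ∈ (GDK δ k).edgeSet) with hTfin
  have hT : Tfin.card ≤ (δ - 1) * k := by
    have hsub : Tfin ⊆ Finset.image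
        (fun a : Fin ((δ - 1) * k) => s((Sum.inl a.castSucc : GDKVert δ k), Sum.inl a.succ))
        Finset.univ := by
      intro e he
      simp only [hTfin, Finset.mem_filter, Finset.mem_univ, true_and] at he
      obtain ⟨ht, hadj⟩ := he
      induction e using Sym2.ind with
      | _ u v =>
        rw [gdkTop_mk] at ht
        obtain ⟨a, rfl⟩ := Sum.isLeft_iff.mp (Bool.and_elim_left ht)
        obtain ⟨b, rfl⟩ := Sum.isLeft_iff.mp (Bool.and_elim_right ht)
        rw [SimpleGraph.mem_edgeSet, GDK, fromRel_adj] at hadj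
        obtain ⟨hne, hr⟩ := hadj
        simp only [Finset.mem_image, Finset.mem_univ, true_and]
        rcases hr with hr | hr
        · have hb : (a : ℕ) < (δ - 1) * k := by have := b.isLt; omega
          refine ⟨⟨(a : ℕ), hb⟩, ?_⟩
          rw [show (⟨(a : ℕ), hb⟩ : Fin ((δ - 1) * k)).castSucc = a from Fin.ext rfl,
            show (⟨(a : ℕ), hb⟩ : Fin ((δ - 1) * k)).succ = b from Fin.ext (by simpa using hr.symm)]
        · have hb : (b : ℕ) < (δ - 1) * k := by have := a.isLt; omega
          refine ⟨⟨(b : ℕ), hb⟩, ?_⟩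
          rw [show (⟨(b : ℕ), hb⟩ : Fin ((δ - 1) * k)).castSucc = b from Fin.ext rfl,
            show (⟨(b : ℕ), hb⟩ : Fin ((δ - 1) * k)).succ = a from Fin.ext (by simpa using hr.symm),
            Sym2.eq_swap]
    calc Tfin.card ≤ _ := Finset.card_le_card hsub
      _ ≤ Finset.univ.card := Finset.card_image_le
      _ = (δ - 1) * k := by simp
  -- key estimate for each selected row
  have key : ∀ i ∈ I, ((δ - 1) * (k * δ)) ≤ d + (δ - 1) * (Tfin.filter (fun e => e ∈ (H i).edgeSet)).card := by
    intro i hi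
    obtain ⟨hconn, hdist⟩ := hdil i hi
    set G' := partGraph (GDK δ k) (gdkRow δ k i) (H i) with hG'
    have ha : (Sum.inr (i, ⟨0, by omega⟩) : GDKVert δ k) ∈ G'.verts := by
      rw [hG', partGraph, Subgraph.verts_sup]
      exact Or.inl ⟨⟨0, by omega⟩, rfl⟩
    have hb : (Sum.inr (i, ⟨((δ - 1) * (k * δ)), by omega⟩) : GDKVert δ k) ∈ G'.verts := by
      rw [hG', partGraph, Subgraph.verts_sup]
      exact Or.inl ⟨⟨((δ - 1) * (k * δ)), by omega⟩, rfl⟩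
    obtain ⟨p, hp, hlen⟩ := (hconn.preconnected ⟨_, ha⟩ ⟨_, hb⟩).exists_path_of_dist
    have hld : p.length ≤ d := by rw [hlen]; exact hdist _ _
    set w := p.map G'.hom with hw
    have hwb := gdkWalk δ k (by omega) hk0 w
    have hphi_a : gdkPhi δ k (G'.hom ⟨_, ha⟩) = 0 := rfl
    have hphi_b : gdkPhi δ k (G'.hom ⟨_, hb⟩) = ((δ - 1) * (k * δ)) := rfl
    rw [hphi_a, hphi_b, Nat.zero_add] at hwb
    have hwl : w.length = p.length := Walk.length_map _ _
    have hwedges : ∀ e ∈ w.edges, e ∈ G'.edgeSet := by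
      intro e he
      rw [hw, Walk.edges_map] at he
      obtain ⟨e', he', rfl⟩ := List.mem_map.mp he
      have hmem := p.edges_subset_edgeSet he'
      induction e' using Sym2.ind with
      | _ x y =>
        rw [SimpleGraph.mem_edgeSet, Subgraph.coe_adj] at hmem
        rw [Sym2.map_pair_eq, Subgraph.mem_edgeSet]
        exact hmem
    have heH : ∀ e : Sym2 (GDKVert δ k), gdkTop δ k e = true → e ∈ G'.edgeSet →
        e ∈ (H i).edgeSet := by
      intro e
      induction e using Sym2.ind with
      | _ u v =>
        intro het heG'
        rw [Subgraph.mem_edgeSet] at heG' ⊢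
        rw [hG', partGraph, Subgraph.sup_adj] at heG'
        rcases heG' with hind | h
        · exfalso
          rw [Subgraph.induce_adj] at hind
          obtain ⟨hu, -, -⟩ := hind
          obtain ⟨j, rfl⟩ := hu
          rw [gdkTop_mk] at het
          simp at het
        · exact h
    have hnodup : w.edges.Nodup :=
      (Walk.map_isPath_of_injective Subgraph.hom_injective hp).edges_nodup
    have hLle : (w.edges.filter (fun e => gdkTop δ k e)).length ≤
        (Tfin.filter (fun e => e ∈ (H i).edgeSet)).card := by
      rw [← List.toFinset_card_of_nodup (hnodup.filter _)]
      apply Finset.card_le_card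
      intro e he
      rw [List.mem_toFinset, List.mem_filter] at he
      obtain ⟨hew, het⟩ := he
      have heG' := hwedges e hew
      have h2 := heH e het heG'
      simp only [hTfin, Finset.mem_filter, Finset.mem_univ, true_and]
      exact ⟨⟨het, (H i).edgeSet_subset h2⟩, h2⟩
    rw [List.countP_eq_length_filter] at hwb
    have h5 : (δ - 1) * (w.edges.filter (fun e => gdkTop δ k e)).length ≤
        (δ - 1) * (Tfin.filter (fun e => e ∈ (H i).edgeSet)).card :=
      Nat.mul_le_mul_left _ hLle
    linarith [hwb, h5, hld, hwl.le, hwl.ge]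
  -- double counting of top edges against congestion
  have hswap : ∑ i ∈ I, (Tfin.filter (fun e => e ∈ (H i).edgeSet)).card ≤ ((δ - 1) * k) * c := by
    calc ∑ i ∈ I, (Tfin.filter (fun e => e ∈ (H i).edgeSet)).card
        = ∑ i ∈ I, ∑ e ∈ Tfin, (if e ∈ (H i).edgeSet then 1 else 0) := by
          refine Finset.sum_congr rfl fun i _ => ?_
          exact Finset.card_filter _ _
      _ = ∑ e ∈ Tfin, ∑ i ∈ I, (if e ∈ (H i).edgeSet then 1 else 0) := Finset.sum_comm
      _ = ∑ e ∈ Tfin, (I.filter (fun i => e ∈ (H i).edgeSet)).card := by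
          refine Finset.sum_congr rfl fun e _ => ?_
          exact (Finset.card_filter _ _).symm
      _ ≤ ∑ e ∈ Tfin, c := by
          refine Finset.sum_le_sum fun e _ => ?_
          have hc := hcong e
          rwa [show {i | i ∈ I ∧ e ∈ (H i).edgeSet}
              = ↑(I.filter (fun i => e ∈ (H i).edgeSet)) by ext x; simp,
            Set.ncard_coe_finset] at hc
      _ = Tfin.card * c := by rw [Finset.sum_const, smul_eq_mul]
      _ ≤ ((δ - 1) * k) * c := Nat.mul_le_mul_right c hT
  -- summing the key estimate
  have hsum : I.card * ((δ - 1) * (k * δ)) ≤ I.card * d + (δ - 1) * (((δ - 1) * k) * c) := by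
    calc I.card * ((δ - 1) * (k * δ)) = ∑ _i ∈ I, ((δ - 1) * (k * δ)) := by rw [Finset.sum_const, smul_eq_mul]
      _ ≤ ∑ i ∈ I, (d + (δ - 1) * (Tfin.filter (fun e => e ∈ (H i).edgeSet)).card) :=
          Finset.sum_le_sum key
      _ = I.card * d + (δ - 1) * ∑ i ∈ I, (Tfin.filter (fun e => e ∈ (H i).edgeSet)).card := by
          rw [Finset.sum_add_distrib, Finset.sum_const, smul_eq_mul, Finset.mul_sum]
      _ ≤ I.card * d + (δ - 1) * (((δ - 1) * k) * c) :=
          Nat.add_le_add_left (Nat.mul_le_mul_left _ hswap) _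
  -- final arithmetic
  have main : ((δ - 1) * (k * δ)) ≤ 2 * d ∨ ((δ - 1) * (k * δ)) ≤ 4 * c := by
    by_cases h2d : ((δ - 1) * (k * δ)) ≤ 2 * d
    · exact Or.inl h2d
    right
    by_contra hcn
    push_neg at h2d hcn
    set q := I.card with hq
    have hq2 : ((δ - 1) * (k * δ)) + 1 ≤ 2 * q := hhalf
    have h3 : 2 * d + 1 ≤ ((δ - 1) * (k * δ)) := h2d
    have hc4 : 4 * c + 1 ≤ ((δ - 1) * (k * δ)) := hcn
    -- q*(2d+1) ≤ q*((δ - 1) * (k * δ))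
    have t1 : 2 * (q * d) + q ≤ q * ((δ - 1) * (k * δ)) := by
      have := Nat.mul_le_mul_left q h3
      linarith [this]
    have e1 : q * ((δ - 1) * (k * δ)) + q ≤ 2 * ((δ - 1) * (((δ - 1) * k) * c)) := by linarith [hsum, t1]
    have t2 : (((δ - 1) * (k * δ)) + 1) * (((δ - 1) * (k * δ)) + 1) ≤ (2 * q) * (((δ - 1) * (k * δ)) + 1) := Nat.mul_le_mul_right (((δ - 1) * (k * δ)) + 1) hq2
    have t3 : q * (((δ - 1) * (k * δ)) + 1) ≤ 2 * ((δ - 1) * (((δ - 1) * k) * c)) := by linarith [e1]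
    have e2 : (((δ - 1) * (k * δ)) + 1) * (((δ - 1) * (k * δ)) + 1) ≤ 4 * ((δ - 1) * (((δ - 1) * k) * c)) := by linarith [t2, t3]
    -- multiply by δ and use (δ-1)*m*δ = (δ-1)*((δ - 1) * (k * δ))
    have e3 : δ * ((((δ - 1) * (k * δ)) + 1) * (((δ - 1) * (k * δ)) + 1)) ≤ 4 * c * ((δ - 1) * ((δ - 1) * (k * δ))) := by
      have h6 := Nat.mul_le_mul_left δ e2
      calc δ * ((((δ - 1) * (k * δ)) + 1) * (((δ - 1) * (k * δ)) + 1)) ≤ δ * (4 * ((δ - 1) * (((δ - 1) * k) * c))) := h6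
        _ = 4 * c * ((δ - 1) * (((δ - 1) * k) * δ)) := by ring
        _ = 4 * c * ((δ - 1) * ((δ - 1) * (k * δ))) := by rw [hmn]
    have e4 : 4 * c * ((δ - 1) * ((δ - 1) * (k * δ))) ≤ ((δ - 1) * (k * δ)) * ((δ - 1) * ((δ - 1) * (k * δ))) :=
      Nat.mul_le_mul_right _ (by omega)
    have e5 : ((δ - 1) * (k * δ)) * ((δ - 1) * ((δ - 1) * (k * δ))) < δ * ((((δ - 1) * (k * δ)) + 1) * (((δ - 1) * (k * δ)) + 1)) := by
      have hδ1 : δ - 1 + 1 = δ := by omega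
      have s1 : ((δ - 1) * (k * δ)) * ((δ - 1) * ((δ - 1) * (k * δ))) ≤ (δ - 1) * ((((δ - 1) * (k * δ)) + 1) * (((δ - 1) * (k * δ)) + 1)) := by
        have : ((δ - 1) * (k * δ)) * ((δ - 1) * (k * δ)) ≤ (((δ - 1) * (k * δ)) + 1) * (((δ - 1) * (k * δ)) + 1) := by nlinarith
        calc ((δ - 1) * (k * δ)) * ((δ - 1) * ((δ - 1) * (k * δ))) = (δ - 1) * (((δ - 1) * (k * δ)) * ((δ - 1) * (k * δ))) := by ring
          _ ≤ (δ - 1) * ((((δ - 1) * (k * δ)) + 1) * (((δ - 1) * (k * δ)) + 1)) := Nat.mul_le_mul_left _ this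
      have s2 : (δ - 1) * ((((δ - 1) * (k * δ)) + 1) * (((δ - 1) * (k * δ)) + 1)) < δ * ((((δ - 1) * (k * δ)) + 1) * (((δ - 1) * (k * δ)) + 1)) := by
        have hpos : 0 < (((δ - 1) * (k * δ)) + 1) * (((δ - 1) * (k * δ)) + 1) := by positivity
        have : δ - 1 < δ := by omega
        exact Nat.mul_lt_mul_of_lt_of_le this (le_refl _) hpos
      exact lt_of_le_of_lt s1 s2
    exact absurd e3 (not_le.mpr (lt_of_le_of_lt e4 e5))
  exact ⟨main, by rcases main with h | h <;> omega⟩
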